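/- (Szegő/Duffin–Schaeffer corollary) A power series ∑ c_n z^n whose coefficients c_n take values in a finite set of integers and which represents a rational function p(z)/q(z) has an eventually periodic coefficient sequence. -/

import Mathlib

theorem stmt_10 (F : PowerSeries ℤ) (S : Finset ℤ)
    (hS : ∀ n, PowerSeries.coeff (R := ℤ) n F ∈ S)
    (p q : Polynomial ℤ) (hq : q ≠ 0)
    (hrat : (q : PowerSeries ℤ) * F = (p : PowerSeries ℤ)) :
    ∃ M k, 1 ≤ k ∧ ∀ n, M ≤ n →
      PowerSeries.coeff (R := ℤ) (n + k) F = PowerSeries.coeff (R := ℤ) n F := by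
  classical
  set c : ℕ → ℤ := fun n => PowerSeries.coeff (R := ℤ) n F with hc
  have hqnd : q.coeff q.natDegree ≠ 0 := by
    rw [Polynomial.coeff_natDegree]
    exact Polynomial.leadingCoeff_ne_zero.mpr hq
  have hex : ∃ i, q.coeff i ≠ 0 := ⟨q.natDegree, hqnd⟩
  set m : ℕ := Nat.find hex with hmdef
  have hm : q.coeff m ≠ 0 := Nat.find_spec hex
  have hmin : ∀ i, i < m → q.coeff i = 0 := fun i hi => by
    have := Nat.find_min hex hi; simpa using this
  have hmle : m ≤ q.natDegree := Nat.find_le hqnd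
  set e : ℕ := q.natDegree - m with hedef
  have hme : m + e = q.natDegree := by omega
  set N : ℕ := p.natDegree + 1 with hNdef
  -- the linear recurrence
  have hsum : ∀ n, N ≤ n →
      ∑ t ∈ Finset.range (e + 1), q.coeff (m + t) * c (n + e - t) = 0 := by
    intro n hn
    have h1 : PowerSeries.coeff (R := ℤ) (n + e + m) ((q : PowerSeries ℤ) * F) = 0 := by
      rw [hrat, Polynomial.coeff_coe]
      exact Polynomial.coeff_eq_zero_of_natDegree_lt (by omega)
    have h2 : ∑ i ∈ Finset.range (n + e + m + 1), q.coeff i * c (n + e + m - i) = 0 := by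
      rw [PowerSeries.coeff_mul, Finset.Nat.sum_antidiagonal_eq_sum_range_succ_mk] at h1
      simpa [Polynomial.coeff_coe, hc] using h1
    have h3 : ∑ i ∈ Finset.Ico m (m + e + 1), q.coeff i * c (n + e + m - i)
        = ∑ i ∈ Finset.range (n + e + m + 1), q.coeff i * c (n + e + m - i) := by
      apply Finset.sum_subset
      · intro i hi
        simp only [Finset.mem_Ico] at hi
        simp only [Finset.mem_range]
        omega
      · intro i _ hi
        simp only [Finset.mem_Ico, not_and_or, not_le, not_lt] at hi
        rcases hi with hi | hi
        · rw [hmin i hi, zero_mul]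
        · rw [Polynomial.coeff_eq_zero_of_natDegree_lt (by omega), zero_mul]

    have h4 : ∑ i ∈ Finset.Ico m (m + e + 1), q.coeff i * c (n + e + m - i)
        = ∑ t ∈ Finset.range (e + 1), q.coeff (m + t) * c (n + e - t) := by
      rw [Finset.sum_Ico_eq_sum_range]
      have h5 : m + e + 1 - m = e + 1 := by omega
      rw [h5]
      apply Finset.sum_congr rfl
      intro t ht
      simp only [Finset.mem_range] at ht
      have h6 : n + e + m - (m + t) = n + e - t := by omega
      rw [h6]
    rw [← h4, h3, h2]
  -- the key step: equal windows propagate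
  have key : ∀ a b, N ≤ a → N ≤ b → (∀ j, j < e → c (a + j) = c (b + j)) →
      c (a + e) = c (b + e) := by
    intro a b ha hb h
    have h1 := hsum a ha
    have h2 := hsum b hb
    rw [Finset.sum_range_succ'] at h1 h2
    have hsame : ∑ t ∈ Finset.range e, q.coeff (m + (t + 1)) * c (a + e - (t + 1))
        = ∑ t ∈ Finset.range e, q.coeff (m + (t + 1)) * c (b + e - (t + 1)) := by
      apply Finset.sum_congr rfl
      intro t ht
      simp only [Finset.mem_range] at ht
      have hj := h (e - (t + 1)) (by omega)
      have ea : a + e - (t + 1) = a + (e - (t + 1)) := by omega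
      have eb : b + e - (t + 1) = b + (e - (t + 1)) := by omega
      rw [ea, eb, hj]
    simp only [add_zero, Nat.sub_zero] at h1 h2
    have h5 : q.coeff m * c (a + e) = q.coeff m * c (b + e) := by
      linarith [hsame, h1, h2]
    exact mul_left_cancel₀ hm h5
  -- pigeonhole
  set T : Finset (Fin e → ℤ) := Fintype.piFinset (fun _ => S) with hT
  set f : ℕ → (Fin e → ℤ) := fun n j => c (n + (j : ℕ)) with hf
  have hmaps : ∀ n ∈ Finset.Icc N (N + T.card), f n ∈ T := by
    intro n _
    simp only [hT, Fintype.mem_piFinset]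
    intro j
    exact hS _
  have hcard : T.card < (Finset.Icc N (N + T.card)).card := by
    rw [Nat.card_Icc]; omega
  obtain ⟨a, haI, b, hbI, hne, hfab⟩ :=
    Finset.exists_ne_map_eq_of_card_lt_of_maps_to hcard hmaps
  -- wlog a < b
  obtain ⟨a, b, hab, haN, hfab⟩ :
      ∃ a b, a < b ∧ N ≤ a ∧ f a = f b := by
    rcases hne.lt_or_gt with h | h
    · exact ⟨a, b, h, (Finset.mem_Icc.mp haI).1, hfab⟩
    · exact ⟨b, a, h, (Finset.mem_Icc.mp hbI).1, hfab.symm⟩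
  set k : ℕ := b - a with hk
  have main : ∀ n, a ≤ n → c (n + k) = c n := by
    intro n
    induction n using Nat.strong_induction_on with
    | _ n ih =>
      intro hn
      by_cases hcase : n < a + e
      · have hwin := congrFun hfab (⟨n - a, by omega⟩ : Fin e)
        simp only [hf] at hwin
        have e1 : a + ((⟨n - a, by omega⟩ : Fin e) : ℕ) = n := by simp; omega
        have e2 : b + ((⟨n - a, by omega⟩ : Fin e) : ℕ) = n + k := by simp; omega
        rw [e1, e2] at hwin
        exact hwin.symm
      · push_neg at hcase
        have hkey := key (n - e) (n - e + k) (by omega) (by omega) ?_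
        · have e1 : n - e + e = n := by omega
          have e2 : n - e + k + e = n + k := by omega
          rw [e1, e2] at hkey
          exact hkey.symm
        · intro j hj
          have hih := ih (n - e + j) (by omega) (by omega)
          have e3 : n - e + k + j = n - e + j + k := by omega
          rw [e3, hih]
  exact ⟨a, k, by omega, fun n hn => main n hn⟩
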